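/- Let C : [0,∞) → [0,∞) be given by C(r) = (rλ)² + Σ_{k=1}^{s} λ_k² (2 - 2cos(r κ_k)) with 0 < κ_1 < ⋯ < κ_s and λ_k > 0 for all k, and similarly C(r) = (rμ)² + Σ_{k=1}^{t} μ_k² (2 - 2cos(r ν_k)) with 0 < ν_1 < ⋯ < ν_t and μ_k > 0. Then s = t, κ_k = ν_k, λ_k = μ_k for all k, and λ = μ (assuming λ, μ ≥ 0). -/
import Mathlib

open Real

lemma my_eq_zero_of_abs_mul_le {e M : ℝ} (h : ∀ T : ℝ, 0 ≤ T → |e| * T ≤ M) : e = 0 := by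
  by_contra he
  have hae : 0 < |e| := abs_pos.mpr he
  have hM : 0 ≤ M := by simpa using h 0 le_rfl
  have := h ((M + 1) / |e|) (by positivity)
  rw [mul_div_cancel₀ _ (ne_of_gt hae)] at this
  linarith

lemma my_integral_cos_mul {b : ℝ} (hb : b ≠ 0) (T : ℝ) :
    ∫ r in (0:ℝ)..T, Real.cos (b * r) = Real.sin (b * T) / b := by
  rw [intervalIntegral.integral_comp_mul_left (fun x => Real.cos x) hb]
  simp [integral_cos, div_eq_inv_mul]

lemma my_integral_cos_cos {ω ω₀ : ℝ} (hω : 0 < ω) (hω₀ : 0 < ω₀) (T : ℝ) :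
    ∫ r in (0:ℝ)..T, Real.cos (ω * r) * Real.cos (ω₀ * r) =
      (Real.sin ((ω + ω₀) * T) / (ω + ω₀)
        + (if ω = ω₀ then T else Real.sin ((ω - ω₀) * T) / (ω - ω₀))) / 2 := by
  have hid : ∀ r : ℝ, Real.cos (ω * r) * Real.cos (ω₀ * r) =
      (Real.cos ((ω + ω₀) * r) + Real.cos ((ω - ω₀) * r)) / 2 := fun r => by
    rw [add_mul, sub_mul, Real.cos_add, Real.cos_sub]; ring
  simp_rw [hid]
  rw [intervalIntegral.integral_div, intervalIntegral.integral_add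
    (Continuous.intervalIntegrable (by continuity) _ _)
    (Continuous.intervalIntegrable (by continuity) _ _),
    my_integral_cos_mul (by positivity : ω + ω₀ ≠ 0)]
  by_cases he : ω = ω₀
  · simp [he]
  · rw [my_integral_cos_mul (sub_ne_zero.mpr he), if_neg he]

lemma trig_coeffs_zero (F : Finset ℝ) (hF : ∀ ω ∈ F, 0 < ω) (a : ℝ → ℝ) (c : ℝ)
    (h : ∀ r : ℝ, ∑ ω ∈ F, a ω * Real.cos (ω * r) = c) : ∀ ω₀ ∈ F, a ω₀ = 0 := by
  intro ω₀ h₀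
  have hω₀ := hF ω₀ h₀
  have habs : ∀ x : ℝ, |Real.sin x| ≤ 1 := fun x =>
    abs_le.mpr ⟨Real.neg_one_le_sin x, Real.sin_le_one x⟩
  have key : ∀ T : ℝ,
      ∑ ω ∈ F, a ω * ((Real.sin ((ω + ω₀) * T) / (ω + ω₀)
        + (if ω = ω₀ then T else Real.sin ((ω - ω₀) * T) / (ω - ω₀))) / 2)
      = c * (Real.sin (ω₀ * T) / ω₀) := by
    intro T
    have hid : ∀ r : ℝ, c * Real.cos (ω₀ * r)
        = ∑ ω ∈ F, a ω * (Real.cos (ω * r) * Real.cos (ω₀ * r)) := fun r => by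
      rw [← h r, Finset.sum_mul]
      exact Finset.sum_congr rfl fun ω _ => by ring
    have e1 : (∫ r in (0:ℝ)..T, c * Real.cos (ω₀ * r)) = c * (Real.sin (ω₀ * T) / ω₀) := by
      rw [intervalIntegral.integral_const_mul, my_integral_cos_mul (ne_of_gt hω₀)]
    rw [← e1]
    simp_rw [hid]
    rw [intervalIntegral.integral_finset_sum (fun ω _ =>
      Continuous.intervalIntegrable (by continuity) _ _)]
    exact Finset.sum_congr rfl fun ω hω => by
      rw [intervalIntegral.integral_const_mul, my_integral_cos_cos (hF ω hω) hω₀]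
  set K : ℝ → ℝ := fun ω => (1 / (ω + ω₀) + (if ω = ω₀ then 0 else 1 / |ω - ω₀|)) / 2 with hK
  have hbound : ∀ T : ℝ, 0 ≤ T →
      |a ω₀| * (T / 2) ≤ |c| / ω₀ + ∑ ω ∈ F, |a ω| * K ω := by
    intro T hT
    have hsplit : a ω₀ * (T / 2) = c * (Real.sin (ω₀ * T) / ω₀)
        - ∑ ω ∈ F, a ω * ((Real.sin ((ω + ω₀) * T) / (ω + ω₀)
          + (if ω = ω₀ then 0 else Real.sin ((ω - ω₀) * T) / (ω - ω₀))) / 2) := by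
      rw [← key T, ← Finset.sum_sub_distrib]
      rw [show a ω₀ * (T / 2) = ∑ ω ∈ F, (if ω = ω₀ then a ω * (T/2) else 0) by
        rw [Finset.sum_ite_eq' F ω₀ (fun ω => a ω * (T/2))]; simp [h₀]]
      exact Finset.sum_congr rfl fun ω _ => by
        by_cases he : ω = ω₀ <;> simp [he] <;> ring
    calc |a ω₀| * (T / 2) = |a ω₀ * (T / 2)| := by
          rw [abs_mul, abs_of_nonneg (by linarith : (0:ℝ) ≤ T / 2)]
      _ = |c * (Real.sin (ω₀ * T) / ω₀)
          - ∑ ω ∈ F, a ω * ((Real.sin ((ω + ω₀) * T) / (ω + ω₀)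
            + (if ω = ω₀ then 0 else Real.sin ((ω - ω₀) * T) / (ω - ω₀))) / 2)| := by rw [hsplit]
      _ ≤ |c * (Real.sin (ω₀ * T) / ω₀)|
          + |∑ ω ∈ F, a ω * ((Real.sin ((ω + ω₀) * T) / (ω + ω₀)
            + (if ω = ω₀ then 0 else Real.sin ((ω - ω₀) * T) / (ω - ω₀))) / 2)| := abs_sub _ _
      _ ≤ |c| / ω₀ + ∑ ω ∈ F, |a ω| * K ω := by
          refine add_le_add ?_ ?_
          · rw [abs_mul, abs_div, abs_of_pos hω₀, div_eq_mul_one_div |c|]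
            refine mul_le_mul_of_nonneg_left ?_ (abs_nonneg c)
            exact div_le_div_of_nonneg_right (habs _) hω₀.le
          · refine (Finset.abs_sum_le_sum_abs _ _).trans (Finset.sum_le_sum fun ω hω => ?_)
            rw [abs_mul]
            refine mul_le_mul_of_nonneg_left ?_ (abs_nonneg _)
            have hωp := hF ω hω
            rw [abs_div, abs_of_pos (by norm_num : (0:ℝ) < 2), hK]
            refine div_le_div_of_nonneg_right ?_ (by norm_num)
            refine (abs_add_le _ _).trans (add_le_add ?_ ?_)
            · rw [abs_div, abs_of_pos (by positivity : (0:ℝ) < ω + ω₀), one_div]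
              rw [div_eq_mul_inv]
              exact mul_le_mul_of_nonneg_right (habs _) (by positivity) |>.trans_eq (one_mul _)
            · by_cases he : ω = ω₀
              · simp [he]
              · rw [if_neg he, if_neg he, abs_div]
                exact div_le_div_of_nonneg_right (habs _) (abs_pos.mpr (sub_ne_zero.mpr he)).le
  have := my_eq_zero_of_abs_mul_le (M := |c| / ω₀ + ∑ ω ∈ F, |a ω| * K ω)
    (fun T hT => by simpa using hbound (2 * T) (by linarith))
  exact this


lemma my_sqrt_inj {a b : ℝ} (ha : 0 ≤ a) (hb : 0 ≤ b) (h : a ^ 2 = b ^ 2) : a = b := by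
  rw [← Real.sqrt_sq ha, ← Real.sqrt_sq hb, h]

theorem uniqueness_of_coefficients (lam mu : ℝ) (hlam : 0 ≤ lam) (hmu : 0 ≤ mu)
    (s t : ℕ) (κ lamk : Fin s → ℝ) (ν muk : Fin t → ℝ)
    (hκmono : StrictMono κ) (hκpos : ∀ k, 0 < κ k) (hlamk : ∀ k, 0 < lamk k)
    (hνmono : StrictMono ν) (hνpos : ∀ k, 0 < ν k) (hmuk : ∀ k, 0 < muk k)
    (hC : ∀ r : ℝ, 0 ≤ r →
      (r * lam) ^ 2 + ∑ k, (lamk k) ^ 2 * (2 - 2 * Real.cos (r * κ k)) =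
      (r * mu) ^ 2 + ∑ k, (muk k) ^ 2 * (2 - 2 * Real.cos (r * ν k))) :
    ∃ e : s = t,
      (∀ k : Fin s, κ k = ν (Fin.cast e k) ∧ lamk k = muk (Fin.cast e k)) ∧
      lam = mu := by
  -- extend to all r by evenness
  have hC' : ∀ r : ℝ,
      (r * lam) ^ 2 + ∑ k, (lamk k) ^ 2 * (2 - 2 * Real.cos (r * κ k)) =
      (r * mu) ^ 2 + ∑ k, (muk k) ^ 2 * (2 - 2 * Real.cos (r * ν k)) := by
    intro r
    rcases le_total 0 r with h | h
    · exact hC r h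
    · have := hC (-r) (by linarith)
      simpa [neg_mul, Real.cos_neg] using this
  -- bounds on the trig sums
  have hboundlam : ∀ r : ℝ, 0 ≤ ∑ k, (lamk k) ^ 2 * (2 - 2 * Real.cos (r * κ k)) ∧
      ∑ k, (lamk k) ^ 2 * (2 - 2 * Real.cos (r * κ k)) ≤ ∑ k, 4 * (lamk k) ^ 2 := by
    intro r
    constructor
    · exact Finset.sum_nonneg fun k _ => mul_nonneg (sq_nonneg _)
        (by nlinarith [Real.cos_le_one (r * κ k)])
    · exact Finset.sum_le_sum fun k _ => by nlinarith [Real.neg_one_le_cos (r * κ k), sq_nonneg (lamk k)]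
  have hboundμ : ∀ r : ℝ, 0 ≤ ∑ k, (muk k) ^ 2 * (2 - 2 * Real.cos (r * ν k)) ∧
      ∑ k, (muk k) ^ 2 * (2 - 2 * Real.cos (r * ν k)) ≤ ∑ k, 4 * (muk k) ^ 2 := by
    intro r
    constructor
    · exact Finset.sum_nonneg fun k _ => mul_nonneg (sq_nonneg _)
        (by nlinarith [Real.cos_le_one (r * ν k)])
    · exact Finset.sum_le_sum fun k _ => by nlinarith [Real.neg_one_le_cos (r * ν k), sq_nonneg (muk k)]
  -- lam = mu
  have hlm : lam = mu := by
    have hsq : lam ^ 2 - mu ^ 2 = 0 := by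
      apply my_eq_zero_of_abs_mul_le
        (M := (∑ k, 4 * (muk k) ^ 2) + ∑ k, 4 * (lamk k) ^ 2)
      intro T hT
      set r := Real.sqrt T with hr
      have hrT : r ^ 2 = T := Real.sq_sqrt hT
      have key : (lam ^ 2 - mu ^ 2) * r ^ 2 =
          (∑ k, (muk k) ^ 2 * (2 - 2 * Real.cos (r * ν k))) -
          ∑ k, (lamk k) ^ 2 * (2 - 2 * Real.cos (r * κ k)) := by
        linear_combination hC' r
      calc |lam ^ 2 - mu ^ 2| * T = |(lam ^ 2 - mu ^ 2) * r ^ 2| := by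
            rw [abs_mul, abs_of_nonneg (sq_nonneg r), hrT]
        _ ≤ _ := by
            rw [key]
            have h1 := hboundlam r; have h2 := hboundμ r
            rw [abs_sub_le_iff]
            constructor <;> [skip; skip] <;> linarith [h1.1, h1.2, h2.1, h2.2]
    exact my_sqrt_inj hlam hmu (by linarith)
  -- cancelled trig identity
  have expandlam : ∀ r : ℝ, ∑ k, (lamk k) ^ 2 * (2 - 2 * Real.cos (r * κ k)) =
      2 * (∑ k, (lamk k) ^ 2) - 2 * ∑ k, (lamk k) ^ 2 * Real.cos (κ k * r) := by
    intro r
    rw [Finset.mul_sum, Finset.mul_sum, ← Finset.sum_sub_distrib]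
    exact Finset.sum_congr rfl fun k _ => by rw [mul_comm r (κ k)]; ring
  have expandν : ∀ r : ℝ, ∑ k, (muk k) ^ 2 * (2 - 2 * Real.cos (r * ν k)) =
      2 * (∑ k, (muk k) ^ 2) - 2 * ∑ k, (muk k) ^ 2 * Real.cos (ν k * r) := by
    intro r
    rw [Finset.mul_sum, Finset.mul_sum, ← Finset.sum_sub_distrib]
    exact Finset.sum_congr rfl fun k _ => by rw [mul_comm r (ν k)]; ring
  set c : ℝ := (∑ k, (lamk k) ^ 2) - ∑ k, (muk k) ^ 2 with hc
  have hS : ∀ r : ℝ, (∑ k, (lamk k) ^ 2 * Real.cos (κ k * r)) -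
      (∑ k, (muk k) ^ 2 * Real.cos (ν k * r)) = c := by
    intro r
    have h1 := hC' r
    rw [expandlam r, expandν r, hlm] at h1
    rw [hc]; linarith
  -- set up the coefficient function
  set F : Finset ℝ := (Finset.image κ Finset.univ) ∪ (Finset.image ν Finset.univ) with hF
  have hmemκ : ∀ k, κ k ∈ F := fun k => Finset.mem_union_left _ (Finset.mem_image_of_mem _ (Finset.mem_univ k))
  have hmemν : ∀ k, ν k ∈ F := fun k => Finset.mem_union_right _ (Finset.mem_image_of_mem _ (Finset.mem_univ k))
  have hFpos : ∀ ω ∈ F, 0 < ω := by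
    intro ω hω
    rcases Finset.mem_union.mp hω with h | h <;>
      · obtain ⟨k, _, rfl⟩ := Finset.mem_image.mp h
        first | exact hκpos k | exact hνpos k
  set aκ : ℝ → ℝ := fun ω => ∑ j, if κ j = ω then (lamk j) ^ 2 else 0 with haκ
  set aν : ℝ → ℝ := fun ω => ∑ j, if ν j = ω then (muk j) ^ 2 else 0 with haν
  have hsum : ∀ r : ℝ, ∑ ω ∈ F, (aκ ω - aν ω) * Real.cos (ω * r) = c := by
    intro r
    have hgen : ∀ (n : ℕ) (f g : Fin n → ℝ), (∀ j, f j ∈ F) →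
        ∑ ω ∈ F, (∑ j, if f j = ω then g j else 0) * Real.cos (ω * r)
          = ∑ j, g j * Real.cos (f j * r) := by
      intro n f g hf
      simp_rw [Finset.sum_mul, ite_mul, zero_mul]
      rw [Finset.sum_comm]
      refine Finset.sum_congr rfl fun j _ => ?_
      rw [Finset.sum_ite_eq F (f j) (fun ω => g j * Real.cos (ω * r)), if_pos (hf j)]
    simp_rw [sub_mul]
    rw [Finset.sum_sub_distrib, haκ, haν,
      hgen s κ (fun j => (lamk j) ^ 2) hmemκ, hgen t ν (fun j => (muk j) ^ 2) hmemν]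
    exact hS r
  have hzero : ∀ ω ∈ F, aκ ω - aν ω = 0 :=
    trig_coeffs_zero F hFpos _ c hsum
  -- evaluate a at κ k and ν k
  have haκκ : ∀ k, aκ (κ k) = (lamk k) ^ 2 := by
    intro k
    rw [haκ]
    simp [hκmono.injective.eq_iff, Finset.sum_ite_eq']
  have haνν : ∀ k, aν (ν k) = (muk k) ^ 2 := by
    intro k
    rw [haν]
    simp [hνmono.injective.eq_iff, Finset.sum_ite_eq']
  have haν_notmem : ∀ ω, (∀ j, ν j ≠ ω) → aν ω = 0 := by
    intro ω hj
    exact Finset.sum_eq_zero fun j _ => if_neg (hj j)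
  have haκ_notmem : ∀ ω, (∀ j, κ j ≠ ω) → aκ ω = 0 := by
    intro ω hj
    exact Finset.sum_eq_zero fun j _ => if_neg (hj j)
  -- ranges coincide
  have himg : Finset.image κ Finset.univ = Finset.image ν Finset.univ := by
    ext ω
    simp only [Finset.mem_image, Finset.mem_univ, true_and]
    constructor
    · rintro ⟨k, rfl⟩
      by_contra hno
      push_neg at hno
      have h0 := hzero (κ k) (hmemκ k)
      rw [haκκ k, haν_notmem (κ k) hno] at h0
      nlinarith [hlamk k]
    · rintro ⟨k, rfl⟩
      by_contra hno
      push_neg at hno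
      have h0 := hzero (ν k) (hmemν k)
      rw [haνν k, haκ_notmem (ν k) hno] at h0
      nlinarith [hmuk k]
  -- cardinality
  have hcards : (Finset.image κ Finset.univ).card = s := by
    rw [Finset.card_image_of_injective _ hκmono.injective, Finset.card_univ, Fintype.card_fin]
  have hcardt : (Finset.image κ Finset.univ).card = t := by
    rw [himg, Finset.card_image_of_injective _ hνmono.injective, Finset.card_univ, Fintype.card_fin]
  have e : s = t := hcards.symm.trans hcardt
  refine ⟨e, ?_, hlm⟩
  -- the two enumerations agree
  have hcaststrict : StrictMono (fun k : Fin s => ν (Fin.cast e k)) := by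
    intro a b hab
    apply hνmono
    rw [Fin.lt_def, Fin.coe_cast, Fin.coe_cast]
    exact hab
  have h1 : κ = (Finset.image κ Finset.univ).orderEmbOfFin hcards :=
    Finset.orderEmbOfFin_unique hcards
      (fun x => Finset.mem_image_of_mem _ (Finset.mem_univ x)) hκmono
  have h2 : (fun k : Fin s => ν (Fin.cast e k)) = (Finset.image κ Finset.univ).orderEmbOfFin hcards :=
    Finset.orderEmbOfFin_unique hcards
      (fun x => by rw [himg]; exact Finset.mem_image_of_mem _ (Finset.mem_univ _)) hcaststrict
  have hκν : ∀ k : Fin s, κ k = ν (Fin.cast e k) := by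
    intro k
    exact (congrFun h1 k).trans (congrFun h2 k).symm
  intro k
  refine ⟨hκν k, ?_⟩
  have h0 := hzero (κ k) (hmemκ k)
  rw [haκκ k] at h0
  have : aν (κ k) = (muk (Fin.cast e k)) ^ 2 := by
    rw [hκν k, haνν]
  rw [this] at h0
  exact my_sqrt_inj (hlamk k).le (hmuk _).le (by linarith)
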